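/- Let n ≥ 1. Let M, B : ℝ → (n×n real matrices) with M differentiable and M(t) symmetric for all t, and suppose M'(t) − 2B(t) is skew-symmetric for every t. Let q, q_d : ℝ → ℝⁿ be twice differentiable, let w : ℝ → ℝⁿ be differentiable, and let G, K : ℝ → ℝⁿ. Define e = q − q_d, s = e' + w, and suppose the input τ is the equivalent control τ(t) = −M(t)(w'(t) − q_d''(t)) − B(t)(s(t) − q'(t)) + G(t) + K(t), and that the dynamics M(t)q''(t) + B(t)q'(t) + G(t) + K(t) = τ(t) holds for all t. Then V₁(t) = (1/2) s(t)ᵀ M(t) s(t) has identically vanishing derivative: V₁'(t) = 0 for all t. -/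

import Mathlib

open Matrix

/-- Equation (17): under the equivalent control law
`τ = −M(ẇ − q̈_d) − B(s − q̇) + G + K` for the exactly-known dynamics
`M q̈ + B q̇ + G + K = τ` with `Ṁ − 2B` skew-symmetric (Property 2), the
Lyapunov function `V₁ = (1/2) sᵀ M s` of the sliding variable `s = ė + w`
has identically vanishing derivative. -/
theorem equivalent_control_keeps_sliding_manifold
    (n : ℕ) (hn : 1 ≤ n)
    (M M' B : ℝ → Matrix (Fin n) (Fin n) ℝ)
    (hMderiv : ∀ t i j, HasDerivAt (fun u => M u i j) (M' t i j) t)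
    (hMsymm : ∀ t, (M t).IsSymm)
    (hskew : ∀ t, (M' t - 2 • B t)ᵀ = -(M' t - 2 • B t))
    (q q' q'' qd qd' qd'' w w' : ℝ → Fin n → ℝ)
    (hq : ∀ t, HasDerivAt q (q' t) t) (hq' : ∀ t, HasDerivAt q' (q'' t) t)
    (hqd : ∀ t, HasDerivAt qd (qd' t) t) (hqd' : ∀ t, HasDerivAt qd' (qd'' t) t)
    (hw : ∀ t, HasDerivAt w (w' t) t)
    (G K τ : ℝ → Fin n → ℝ)
    (e s : ℝ → Fin n → ℝ)
    (he : ∀ t, e t = q t - qd t)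
    (hs : ∀ t, s t = (q' t - qd' t) + w t)
    (hτ : ∀ t, τ t = -(M t).mulVec (w' t - qd'' t) -
      (B t).mulVec (s t - q' t) + G t + K t)
    (hdyn : ∀ t, (M t).mulVec (q'' t) + (B t).mulVec (q' t) + G t + K t = τ t)
    (V₁ : ℝ → ℝ)
    (hV₁ : ∀ t, V₁ t = (1 / 2) * (s t ⬝ᵥ (M t).mulVec (s t))) :
    ∀ t, HasDerivAt V₁ 0 t := by
  intro t
  have hsfun : s = fun u => (q' u - qd' u) + w u := funext hs
  set ds : Fin n → ℝ := q'' t - qd'' t + w' t with hds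
  -- componentwise derivatives of s
  have hsd : ∀ i, HasDerivAt (fun u => s u i) (ds i) t := by
    intro i
    have h : HasDerivAt (fun u => (q' u - qd' u) + w u) ds t :=
      ((hq' t).sub (hqd' t)).add (hw t)
    rw [hsfun]
    exact (hasDerivAt_pi.mp h) i
  -- key identity: M *ᵥ ds = -(B *ᵥ s)
  have key : M t *ᵥ ds = -(B t *ᵥ s t) := by
    have h := hdyn t
    rw [hτ t] at h
    have h2 : M t *ᵥ q'' t + B t *ᵥ q' t =
        -(M t *ᵥ (w' t - qd'' t)) - B t *ᵥ (s t - q' t) := by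
      have := congrArg (fun v => v - G t - K t) h
      simpa [add_sub_cancel_right, add_sub_cancel_left, sub_sub] using this
    rw [mulVec_sub, mulVec_sub] at h2
    rw [hds, mulVec_add, mulVec_sub]
    linear_combination h2
  -- quadratic form of skew part vanishes
  have hskew0 : s t ⬝ᵥ (M' t - 2 • B t) *ᵥ s t = 0 := by
    have h1 : s t ⬝ᵥ (M' t - 2 • B t) *ᵥ s t = ((M' t - 2 • B t)ᵀ *ᵥ s t) ⬝ᵥ s t := by
      rw [dotProduct_mulVec, ← vecMul_transpose, transpose_transpose]
    rw [hskew t, neg_mulVec, neg_dotProduct, dotProduct_comm] at h1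
    rw [dotProduct_comm]
    linarith
  -- the raw derivative
  have hV : HasDerivAt V₁
      ((1/2) * ∑ i, (ds i * ∑ j, M t i j * s t j +
        s t i * ∑ j, (M' t i j * s t j + M t i j * ds j))) t := by
    have hVfun : V₁ = fun u => (1/2) * ∑ i, (s u i * ∑ j, M u i j * s u j) := by
      funext u
      rw [hV₁ u]
      simp [dotProduct, mulVec]
    rw [hVfun]
    exact HasDerivAt.const_mul _ (HasDerivAt.fun_sum fun i _ =>
      (hsd i).mul (HasDerivAt.fun_sum fun j _ => (hMderiv t i j).mul (hsd j)))
  -- show the raw derivative equals 0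
  have hD : (1/2) * ∑ i, (ds i * ∑ j, M t i j * s t j +
      s t i * ∑ j, (M' t i j * s t j + M t i j * ds j)) =
      (1/2) * (ds ⬝ᵥ M t *ᵥ s t + (s t ⬝ᵥ M' t *ᵥ s t + s t ⬝ᵥ M t *ᵥ ds)) := by
    simp [dotProduct, mulVec, mul_add, Finset.sum_add_distrib, Finset.mul_sum]
  rw [hD] at hV
  have hsym : ds ⬝ᵥ M t *ᵥ s t = s t ⬝ᵥ M t *ᵥ ds := by
    rw [dotProduct_mulVec]
    nth_rewrite 1 [← (hMsymm t).eq]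
    rw [vecMul_transpose, dotProduct_comm]
  have hM' : s t ⬝ᵥ M' t *ᵥ s t = 2 * (s t ⬝ᵥ B t *ᵥ s t) := by
    have : M' t = (M' t - 2 • B t) + 2 • B t := by ring_nf; rw [sub_add_cancel]
    rw [this, add_mulVec, dotProduct_add, hskew0, smul_mulVec, dotProduct_smul]
    simp
  have hMds : s t ⬝ᵥ M t *ᵥ ds = -(s t ⬝ᵥ B t *ᵥ s t) := by
    rw [key, dotProduct_neg]
  have : (1/2) * (ds ⬝ᵥ M t *ᵥ s t + (s t ⬝ᵥ M' t *ᵥ s t + s t ⬝ᵥ M t *ᵥ ds)) = 0 := by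
    rw [hsym, hM', hMds]; ring
  rwa [this] at hV
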